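/- Let Δ be a finite simplicial complex on vertex set S and P a partial order on S. Then for any word w ∈ Γ(Δ,P), the star of w in Γ(Δ,P) equals Γ(st_Δ(c(w)), P + w), where P + w is the transitive closure of P together with the relations imposed by the letter order of w. -/

import Mathlib

open Relation List

section Aux
variable {S : Type*}

lemma aux_pair_sublist_trans {l : List S} (hl : l.Nodup) :
    ∀ {a b c : S}, [a, b].Sublist l → [b, c].Sublist l → [a, c].Sublist l := by
  induction l with
  | nil => intro a b c h _; exact absurd h (by simp)
  | cons x t ih =>
    intro a b c h1 h2
    rw [List.nodup_cons] at hl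
    cases h1 with
    | cons _ h1 =>
      have hb : b ∈ t := h1.subset (by simp)
      cases h2 with
      | cons _ h2 => exact (ih hl.2 h1 h2).cons x
      | cons_cons _ h2 => exact absurd hb hl.1
    | cons_cons _ h1 =>
      have hb : b ∈ t := h1.subset (by simp)
      cases h2 with
      | cons _ h2 =>
        have hc : c ∈ t := h2.subset (by simp)
        exact (List.singleton_sublist.mpr hc).cons₂ x
      | cons_cons _ h2 => exact absurd hb hl.1

lemma aux_pair_sublist_irrefl {l : List S} (hl : l.Nodup) {a : S} : ¬ [a, a].Sublist l := by
  intro h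
  have := hl.sublist h
  simp at this

lemma aux_pair_sublist_total {l : List S} (hl : l.Nodup) :
    ∀ {a b : S}, a ∈ l → b ∈ l → a ≠ b → [a, b].Sublist l ∨ [b, a].Sublist l := by
  induction l with
  | nil => intro a b ha _ _; simp at ha
  | cons x t ih =>
    intro a b ha hb hab
    rw [List.nodup_cons] at hl
    rcases List.mem_cons.1 ha with rfl | ha'
    · left
      have hb' : b ∈ t := (List.mem_cons.1 hb).resolve_left fun h => hab h.symm
      exact (List.singleton_sublist.mpr hb').cons₂ a
    · rcases List.mem_cons.1 hb with rfl | hb'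
      · right
        exact (List.singleton_sublist.mpr ha').cons₂ b
      · exact (ih hl.2 ha' hb' hab).imp (·.cons x) (·.cons x)

lemma aux_compress {t : S → S → Prop} {l : List S} {s : S → S → Prop}
    (hl : l.Nodup)
    (ht : Transitive t) (hti : Irreflexive t)
    (hs : ∀ a b, s a b → [a, b].Sublist l)
    (hcompat : ∀ a b, t a b → a ∈ l → b ∈ l → [a, b].Sublist l) :
    Irreflexive (Relation.TransGen fun x y => t x y ∨ s x y) := by
  set Q : S → S → Prop := fun a b => t a b ∨
    ∃ a' b', (a = a' ∨ t a a') ∧ [a', b'].Sublist l ∧ (b' = b ∨ t b' b) with hQdef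
  have hmeml : ∀ {a b : S}, [a, b].Sublist l → a ∈ l := fun h => h.subset (by simp)
  have hmemr : ∀ {a b : S}, [a, b].Sublist l → b ∈ l := fun h => h.subset (by simp)
  -- composing the middle: b' (in l), reflexive-t to c' (in l) gives pair sublist or equality
  have hmid : ∀ {b c : S}, b ∈ l → c ∈ l → (b = c ∨ t b c) → b = c ∨ [b, c].Sublist l := by
    intro b c hb hc h
    rcases h with rfl | h
    · exact Or.inl rfl
    · exact Or.inr (hcompat _ _ h hb hc)
  have hQtrans : Transitive Q := by
    intro a b c hab hbc
    rcases hab with hab | ⟨a', b', ha, hpair, hb⟩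
    · rcases hbc with hbc | ⟨b'', c', hb, hpair, hc⟩
      · exact Or.inl (ht hab hbc)
      · refine Or.inr ⟨b'', c', ?_, hpair, hc⟩
        rcases hb with rfl | hb
        · exact Or.inr hab
        · exact Or.inr (ht hab hb)
    · rcases hbc with hbc | ⟨b'', c', hb2, hpair2, hc⟩
      · refine Or.inr ⟨a', b', ha, hpair, ?_⟩
        rcases hb with rfl | hb
        · exact Or.inr hbc
        · exact Or.inr (ht hb hbc)
      · -- compose b' →(refl t) b →(refl t) b''
        have hbb : b' = b'' ∨ t b' b'' := by
          rcases hb with rfl | hb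
          · exact hb2
          · rcases hb2 with rfl | hb2
            · exact Or.inr hb
            · exact Or.inr (ht hb hb2)
        rcases hmid (hmemr hpair) (hmeml hpair2) hbb with rfl | hmidp
        · exact Or.inr ⟨a', c', ha, aux_pair_sublist_trans hl hpair hpair2, hc⟩
        · exact Or.inr ⟨a', c', ha,
            aux_pair_sublist_trans hl (aux_pair_sublist_trans hl hpair hmidp) hpair2, hc⟩
  have hle : ∀ a b, (t a b ∨ s a b) → Q a b := by
    intro a b h
    rcases h with h | h
    · exact Or.inl h
    · exact Or.inr ⟨a, b, Or.inl rfl, hs _ _ h, Or.inl rfl⟩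
  intro a ha
  have hQ : Q a a := by
    have := Relation.TransGen.mono hle a a ha
    haveI hQi : IsTrans S Q := ⟨hQtrans⟩; rwa [Relation.transGen_eq_self] at this
  rcases hQ with h | ⟨a', b', h1, hpair, h2⟩
  · exact hti a h
  · -- b' refl-t a refl-t a', both in l
    have hba : b' = a' ∨ t b' a' := by
      rcases h2 with rfl | h2
      · exact h1
      · rcases h1 with rfl | h1
        · exact Or.inr h2
        · exact Or.inr (ht h2 h1)
    rcases hmid (hmemr hpair) (hmeml hpair) hba with rfl | hmidp
    · exact aux_pair_sublist_irrefl hl hpair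
    · exact aux_pair_sublist_irrefl hl (aux_pair_sublist_trans hl hpair hmidp)


lemma aux_sublist_of_sorted {s : S → S → Prop}
    (hasym : ∀ a b, s a b → s b a → False) :
    ∀ (l m : List S), l.Pairwise s → m.Pairwise s → (∀ x ∈ m, x ∈ l) → m.Sublist l := by
  intro l
  induction l with
  | nil =>
    intro m _ _ hsub
    cases m with
    | nil => exact List.Sublist.refl _
    | cons a m' => exact absurd (hsub a (by simp)) (by simp)
  | cons b l' ih =>
    intro m hl hm hsub
    cases m with
    | nil => exact List.nil_sublist _
    | cons a m' =>
      rw [List.pairwise_cons] at hm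
      rw [List.pairwise_cons] at hl
      by_cases hab : a = b
      · subst hab
        refine (ih m' hl.2 hm.2 ?_).cons₂ a
        intro x hx
        have hx' : x ∈ a :: l' := hsub x (by simp [hx])
        rcases List.mem_cons.1 hx' with rfl | h
        · exact absurd (hm.1 x hx) (fun h => hasym _ _ h h)
        · exact h
      · refine (ih (a :: m') hl.2 (List.pairwise_cons.2 hm) ?_).cons b
        intro x hx
        have hx' : x ∈ b :: l' := hsub x hx
        rcases List.mem_cons.1 hx' with rfl | h
        · -- x = b ∈ m
          rcases List.mem_cons.1 hx with rfl | hxm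
          · exact absurd rfl hab
          · -- s a x (from hm), and a ∈ l', so s x a (from hl), contradiction
            have h1 : s a x := hm.1 x hxm
            have ha : a ∈ l' := by
              have := hsub a (by simp)
              rcases List.mem_cons.1 this with rfl | h
              · exact absurd rfl hab
              · exact h
            have h2 : s x a := hl.1 a ha
            exact absurd h1 (fun h => hasym _ _ h h2)
        · exact h
end Aux

theorem star_eq_gamma_star {S : Type*} [DecidableEq S] [PartialOrder S]
    (Δ : Set (Finset S)) (hfin : Δ.Finite)
    (hdown : ∀ σ ∈ Δ, ∀ τ ⊆ σ, τ ∈ Δ)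
    (w : List S) (hw : w.Nodup ∧ w.toFinset ∈ Δ ∧
      w.Pairwise fun a b => ¬ b < a) :
    {u : List S | (u.Nodup ∧ u.toFinset ∈ Δ ∧
        u.Pairwise fun a b => ¬ b < a) ∧
      ∃ v : List S, (v.Nodup ∧ v.toFinset ∈ Δ ∧
        v.Pairwise fun a b => ¬ b < a) ∧ w.Sublist v ∧ u.Sublist v}
    = {u : List S | u.Nodup ∧ w.toFinset ∪ u.toFinset ∈ Δ ∧
        u.Pairwise fun a b =>
          ¬ Relation.TransGen (fun x y => x < y ∨ [x, y].Sublist w) b a} := by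
  obtain ⟨hwnd, hwΔ, hwp⟩ := hw
  ext u
  simp only [Set.mem_setOf_eq]
  constructor
  · rintro ⟨⟨hund, huΔ, hup⟩, v, ⟨hvnd, hvΔ, hvp⟩, hwv, huv⟩
    refine ⟨hund, hdown _ hvΔ _ ?_, ?_⟩
    · intro x hx
      rw [Finset.mem_union] at hx
      rw [List.mem_toFinset]
      rcases hx with hx | hx <;> rw [List.mem_toFinset] at hx
      · exact hwv.subset hx
      · exact huv.subset hx
    · rw [List.pairwise_iff_forall_sublist]
      intro a b hab hT
      have hirr : Irreflexive (Relation.TransGen fun x y => x < y ∨ [x, y].Sublist v) :=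
        aux_compress hvnd (fun _ _ _ h1 h2 => lt_trans h1 h2) lt_irrefl
          (fun _ _ h => h)
          (fun a b hlt ha hb => by
            rcases aux_pair_sublist_total hvnd ha hb (ne_of_lt hlt) with h | h
            · exact h
            · exact absurd hlt (List.pairwise_iff_forall_sublist.1 hvp h))
      have h1 : Relation.TransGen (fun x y => x < y ∨ [x, y].Sublist v) b a :=
        Relation.TransGen.mono (fun x y (h : x < y ∨ [x, y].Sublist w) => h.imp id fun h => h.trans hwv) b a hT
      have h2 : Relation.TransGen (fun x y => x < y ∨ [x, y].Sublist v) a b :=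
        Relation.TransGen.single (Or.inr (hab.trans huv))
      exact hirr a (h2.trans h1)
  · rintro ⟨hund, hFΔ, hup⟩
    have hwpair : ∀ {a b : S}, [a, b].Sublist w → ¬ b < a :=
      List.pairwise_iff_forall_sublist.1 hwp
    have hupair : ∀ {a b : S}, [a, b].Sublist u →
        ¬ Relation.TransGen (fun x y => x < y ∨ [x, y].Sublist w) b a :=
      List.pairwise_iff_forall_sublist.1 hup
    have hirrW : Irreflexive (Relation.TransGen fun x y => x < y ∨ [x, y].Sublist w) :=
      aux_compress hwnd (fun _ _ _ h1 h2 => lt_trans h1 h2) lt_irrefl (fun _ _ h => h)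
        (fun a b hlt ha hb => by
          rcases aux_pair_sublist_total hwnd ha hb (ne_of_lt hlt) with h | h
          · exact h
          · exact absurd hlt (hwpair h))
    have hirrT : Irreflexive (Relation.TransGen fun x y =>
        Relation.TransGen (fun x y => x < y ∨ [x, y].Sublist w) x y ∨ [x, y].Sublist u) := by
      refine aux_compress hund (fun _ _ _ h1 h2 => h1.trans h2) hirrW (fun _ _ h => h) ?_
      intro a b h ha hb
      have hne : a ≠ b := by rintro rfl; exact hirrW a h
      rcases aux_pair_sublist_total hund ha hb hne with hh | hh
      · exact hh
      · exact absurd h (hupair hh)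
    set R : S → S → Prop := fun a b => a = b ∨ Relation.TransGen (fun x y =>
        Relation.TransGen (fun x y => x < y ∨ [x, y].Sublist w) x y ∨ [x, y].Sublist u) a b
      with hRdef
    haveI hpo : IsPartialOrder S R :=
      { refl := fun a => Or.inl rfl
        trans := by
          rintro a b c (rfl | h1) (rfl | h2)
          · exact Or.inl rfl
          · exact Or.inr h2
          · exact Or.inr h1
          · exact Or.inr (h1.trans h2)
        antisymm := by
          rintro a b (rfl | h1) h2
          · rfl
          · rcases h2 with rfl | h2
            · rfl
            · exact absurd (h1.trans h2) (hirrT a) }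
    obtain ⟨s, hlin, hRs⟩ := extend_partialOrder R
    haveI := hlin.toIsPartialOrder
    haveI := hlin.toTotal
    haveI : DecidableRel s := fun a b => Classical.propDecidable _
    set F : Finset S := w.toFinset ∪ u.toFinset with hFdef
    set v : List S := F.sort s with hvdef
    have hvnd : v.Nodup := Finset.sort_nodup F s
    have hvF : v.toFinset = F := Finset.sort_toFinset F s
    have hvsorted : v.Pairwise s := Finset.pairwise_sort F s
    have hvs' : v.Pairwise fun a b => s a b ∧ a ≠ b := hvsorted.and hvnd
    have hasym : ∀ a b : S, (s a b ∧ a ≠ b) → (s b a ∧ b ≠ a) → False :=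
      fun a b h1 h2 => h1.2 (antisymm h1.1 h2.1)
    have hws' : w.Pairwise fun a b => s a b ∧ a ≠ b := by
      rw [List.pairwise_iff_forall_sublist]
      intro a b hab
      have hne : a ≠ b := by rintro rfl; exact aux_pair_sublist_irrefl hwnd hab
      exact ⟨hRs _ _ (Or.inr (Relation.TransGen.single
        (Or.inl (Relation.TransGen.single (Or.inr hab))))), hne⟩
    have hus' : u.Pairwise fun a b => s a b ∧ a ≠ b := by
      rw [List.pairwise_iff_forall_sublist]
      intro a b hab
      have hne : a ≠ b := by rintro rfl; exact aux_pair_sublist_irrefl hund hab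
      exact ⟨hRs _ _ (Or.inr (Relation.TransGen.single (Or.inr hab))), hne⟩
    have hwv : w.Sublist v :=
      aux_sublist_of_sorted hasym v w hvs' hws' fun x hx =>
        (Finset.mem_sort s).2 (Finset.mem_union_left _ (List.mem_toFinset.2 hx))
    have huv : u.Sublist v :=
      aux_sublist_of_sorted hasym v u hvs' hus' fun x hx =>
        (Finset.mem_sort s).2 (Finset.mem_union_right _ (List.mem_toFinset.2 hx))
    refine ⟨⟨hund, hdown _ hFΔ _ ?_, hup.imp fun h hlt =>
      h (Relation.TransGen.single (Or.inl hlt))⟩, v, ⟨hvnd, ?_, ?_⟩, hwv, huv⟩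
    · rw [hFdef]; exact Finset.subset_union_right
    · rw [hvF]; exact hFΔ
    · rw [List.pairwise_iff_forall_sublist]
      intro a b hab hba
      have h1 : s a b ∧ a ≠ b := List.pairwise_iff_forall_sublist.1 hvs' hab
      have h2 : s b a := hRs _ _ (Or.inr (Relation.TransGen.single
        (Or.inl (Relation.TransGen.single (Or.inl hba)))))
      exact h1.2 (antisymm h1.1 h2)
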